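/- Let d ≥ 1 and let E = ℝᵈ (Euclidean space). Let f, g : E → ℝ be functions such that: g is convex on E; there exist a, b ≥ 0 with |f(x)| ≤ a + b·‖x‖² for all x; and there exists c > 0 such that x ↦ f(x) − (c/2)·‖x‖² is convex on E. Then for every x ∈ E the set { f(v) + g(x − v) : v ∈ E } is bounded below, and there exist constants a', b' ≥ 0 such that the inf-convolution (f □ g)(x) := inf_{v ∈ E} ( f(v) + g(x − v) ) satisfies |(f □ g)(x)| ≤ a' + b'·‖x‖² for all x ∈ E. -/

import Mathlib

open Set

/-- A convex function on a finite-dimensional real normed space has an affine minorant,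
in the weak form `k - K * ‖x‖ ≤ g x`. -/
lemma convexOn_exists_minorant {E : Type*} [NormedAddCommGroup E] [NormedSpace ℝ E]
    [FiniteDimensional ℝ E] {g : E → ℝ} (hg : ConvexOn ℝ Set.univ g) :
    ∃ k K : ℝ, 0 ≤ K ∧ ∀ x, k - K * ‖x‖ ≤ g x := by
  have hcont : Continuous g := hg.locallyLipschitz.continuous
  set T : Set (E × ℝ) := {q : E × ℝ | g q.1 < q.2} with hT
  have hTopen : IsOpen T := isOpen_lt (hcont.comp continuous_fst) continuous_snd
  have hTconv : Convex ℝ T := by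
    intro p hp q hq s t hs ht hst
    simp only [hT, mem_setOf_eq] at hp hq ⊢
    have h1 := hg.2 (mem_univ p.1) (mem_univ q.1) hs ht hst
    calc g (s • p + t • q).1 = g (s • p.1 + t • q.1) := rfl
      _ ≤ s * g p.1 + t * g q.1 := h1
      _ < s * p.2 + t * q.2 := by
          rcases hs.lt_or_eq with hs' | hs'
          · rcases ht.lt_or_eq with ht' | ht'
            · exact add_lt_add (by nlinarith) (by nlinarith)
            · have : s = 1 := by linarith
              subst this; simp only [← ht'] ; nlinarith
          · have : t = 1 := by linarith
            subst this; simp only [← hs']; nlinarith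
      _ = (s • p + t • q).2 := rfl
  have hpT : ((0 : E), g 0 - 1) ∉ T := by
    simp [hT]
  obtain ⟨L, hL⟩ := geometric_hahn_banach_point_open hTconv hTopen hpT
  set α : ℝ := L ((0 : E), (1 : ℝ)) with hα
  have hsplit : ∀ (x : E) (t : ℝ), L (x, t) = L (x, 0) + t * α := by
    intro x t
    have : (x, t) = (x, (0:ℝ)) + t • ((0 : E), (1 : ℝ)) := by
      simp [Prod.ext_iff]
    rw [this, map_add, map_smul]
    simp [hα, smul_eq_mul]
  have hkey : ∀ (x : E) (t : ℝ), g x < t → L ((0:E), g 0 - 1) < L (x, 0) + t * α :=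
    fun x t h => by rw [← hsplit]; exact hL (x, t) h
  have hL0 : L ((0:E), g 0 - 1) = (g 0 - 1) * α := by
    rw [show ((0:E), g 0 - 1) = ((0:E), (0:ℝ)) + (g 0 - 1) • ((0:E), (1:ℝ)) by simp [Prod.ext_iff],
      map_add, map_smul]
    simp [hα, smul_eq_mul]
    exact map_zero L
  have hαpos : 0 < α := by
    have h1 := hkey 0 (g 0 + 1) (by linarith)
    rw [hL0] at h1
    have h2 : L ((0:E), (0:ℝ)) = 0 := by
      rw [show ((0:E), (0:ℝ)) = (0 : E × ℝ) from rfl, map_zero]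
    rw [h2] at h1
    nlinarith
  have hineq : ∀ x : E, (g 0 - 1) * α ≤ L (x, 0) + g x * α := by
    intro x
    refine le_of_forall_pos_le_add fun ε hε => ?_
    have h1 := hkey x (g x + ε / α) (by have := div_pos hε hαpos; linarith)
    rw [hL0] at h1
    have : (g x + ε / α) * α = g x * α + ε := by field_simp
    nlinarith
  refine ⟨g 0 - 1, ‖L‖ / α, by positivity, fun x => ?_⟩
  have h1 := hineq x
  have h2 : |L (x, 0)| ≤ ‖L‖ * ‖x‖ := by
    have := L.le_opNorm (x, 0)
    rwa [show ‖((x : E), (0:ℝ))‖ = ‖x‖ by simp [Prod.norm_def]] at this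
  have h3 : L (x, 0) ≤ ‖L‖ * ‖x‖ := (abs_le.mp h2).2
  have h4 : (g 0 - 1) * α - ‖L‖ * ‖x‖ ≤ g x * α := by linarith
  have h5 : ((g 0 - 1) * α - ‖L‖ * ‖x‖) / α ≤ g x := (div_le_iff₀ hαpos).mpr h4
  have h6 : g 0 - 1 - ‖L‖ / α * ‖x‖ = ((g 0 - 1) * α - ‖L‖ * ‖x‖) / α := by
    field_simp
  rw [h6]
  exact h5

/-- If `f` has quadratic growth and is strongly convex, and `g` is convex on `ℝᵈ`, then
the inf-convolution `f □ g` is well defined (the infimum is over a set bounded below) and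
has quadratic growth. -/
theorem inf_convolution_quadratic_growth
    (d : ℕ) (hd : 1 ≤ d)
    (f g : EuclideanSpace ℝ (Fin d) → ℝ)
    (hg : ConvexOn ℝ Set.univ g)
    (a b : ℝ) (ha : 0 ≤ a) (hb : 0 ≤ b)
    (hf : ∀ x : EuclideanSpace ℝ (Fin d), |f x| ≤ a + b * ‖x‖ ^ 2)
    (c : ℝ) (hc : 0 < c)
    (hstrong : ConvexOn ℝ Set.univ
      (fun x : EuclideanSpace ℝ (Fin d) => f x - c / 2 * ‖x‖ ^ 2)) :
    (∀ x : EuclideanSpace ℝ (Fin d),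
        BddBelow (Set.range fun v : EuclideanSpace ℝ (Fin d) => f v + g (x - v))) ∧
      ∃ a' b' : ℝ, 0 ≤ a' ∧ 0 ≤ b' ∧
        ∀ x : EuclideanSpace ℝ (Fin d),
          |⨅ v : EuclideanSpace ℝ (Fin d), (f v + g (x - v))| ≤ a' + b' * ‖x‖ ^ 2 := by
  obtain ⟨k, K, hK, hgmin⟩ := convexOn_exists_minorant hg
  obtain ⟨k', K', hK', hfmin⟩ := convexOn_exists_minorant hstrong
  obtain ⟨A, hA⟩ : ∃ A : ℝ, A = k + k' - (K + K') ^ 2 / (2 * c) - K / 2 := ⟨_, rfl⟩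
  -- pointwise lower bound
  have hlow : ∀ x v : EuclideanSpace ℝ (Fin d),
      A - K / 2 * ‖x‖ ^ 2 ≤ f v + g (x - v) := by
    intro x v
    have h1 := hfmin v
    have h2 := hgmin (x - v)
    have h3 : K * ‖x - v‖ ≤ K * ‖x‖ + K * ‖v‖ := by
      have h := norm_sub_le x v
      nlinarith
    have h5 : -((K + K') ^ 2 / (2 * c)) ≤ c / 2 * ‖v‖ ^ 2 - (K + K') * ‖v‖ := by
      have h2c : (0 : ℝ) < 2 * c := by linarith
      rw [neg_le, le_div_iff₀ h2c]
      nlinarith [sq_nonneg (c * ‖v‖ - (K + K'))]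
    have h6 : K * ‖x‖ ≤ K / 2 + K / 2 * ‖x‖ ^ 2 := by
      have := mul_nonneg hK (sq_nonneg (‖x‖ - 1))
      nlinarith
    rw [hA]
    linarith
  have hbdd : ∀ x : EuclideanSpace ℝ (Fin d),
      BddBelow (Set.range fun v : EuclideanSpace ℝ (Fin d) => f v + g (x - v)) := by
    intro x
    refine ⟨A - K / 2 * ‖x‖ ^ 2, ?_⟩
    rintro _ ⟨v, rfl⟩
    exact hlow x v
  refine ⟨hbdd, a + |g 0| + |A|, b + K / 2, by positivity, by linarith, fun x => ?_⟩
  have hxsq : (0 : ℝ) ≤ ‖x‖ ^ 2 := sq_nonneg _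
  rw [abs_le]
  constructor
  · have h1 : A - K / 2 * ‖x‖ ^ 2 ≤ ⨅ v : EuclideanSpace ℝ (Fin d), (f v + g (x - v)) :=
      le_ciInf (hlow x)
    have h2 : -|A| ≤ A := neg_abs_le A
    have h3 : (0:ℝ) ≤ |g 0| := abs_nonneg _
    have h4 : (0:ℝ) ≤ b * ‖x‖ ^ 2 := mul_nonneg hb hxsq
    have h5 : (0:ℝ) ≤ K / 2 * ‖x‖ ^ 2 := by positivity
    refine le_trans ?_ h1
    nlinarith [h2, h3, h4, h5, ha]
  · have h1 : (⨅ v : EuclideanSpace ℝ (Fin d), (f v + g (x - v))) ≤ f x + g (x - x) :=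
      ciInf_le (hbdd x) x
    rw [sub_self] at h1
    have h2 := (abs_le.mp (hf x)).2
    have h3 : g 0 ≤ |g 0| := le_abs_self _
    have h4 : (0:ℝ) ≤ |A| := abs_nonneg _
    have h5 : (0:ℝ) ≤ K / 2 * ‖x‖ ^ 2 := by positivity
    linarith
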